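/- Let, for each N, (X_n, Y_n, U_n, V_n), n = 1,…,N, be real random variables such that all of them are mutually independent, each X_n, Y_n is Gaussian with mean 0 and variance ρ_A²/2, and each U_n, V_n is Gaussian with mean 0 and variance ρ_t²/2, for ρ_A, ρ_t > 0, and set Z_n = √(X_n² + Y_n²)·√(U_n² + V_n²). Then (1/N²) · E[ (∑_{n=1}^N Z_n)² ] tends to π² ρ_A² ρ_t² / 16 as N → ∞. -/

import Mathlib

noncomputable section AuxSection

open MeasureTheory ProbabilityTheory Real Filter
open scoped NNReal ENNReal

lemma pdf_eq (v : ℝ≥0) (x : ℝ) : gaussianPDFReal 0 v x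
    = (Real.sqrt (2*π*v))⁻¹ * Real.exp (-((2*(v:ℝ))⁻¹) * x^2) := by
  rw [gaussianPDFReal]
  congr 1
  rw [sub_zero]
  ring_nf

lemma prod_gauss_eq {v : ℝ≥0} (hv : v ≠ 0) :
    (gaussianReal 0 v).prod (gaussianReal 0 v)
      = (volume : Measure (ℝ × ℝ)).withDensity
          (fun p => ENNReal.ofReal (gaussianPDFReal 0 v p.1 * gaussianPDFReal 0 v p.2)) := by
  have hm := measurable_gaussianPDF 0 v
  haveI : IsProbabilityMeasure ((volume : Measure ℝ).withDensity (gaussianPDF 0 v)) := by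
    rw [← gaussianReal_of_var_ne_zero 0 hv]; infer_instance
  rw [gaussianReal_of_var_ne_zero _ hv, Measure.volume_eq_prod]
  refine (Measure.prod_eq fun s t hs ht => ?_)
  rw [withDensity_apply _ (hs.prod ht), ← Measure.prod_restrict,
    withDensity_apply _ hs, withDensity_apply _ ht]
  have h1 : ∀ p : ℝ × ℝ, ENNReal.ofReal (gaussianPDFReal 0 v p.1 * gaussianPDFReal 0 v p.2)
      = gaussianPDF 0 v p.1 * gaussianPDF 0 v p.2 := fun p =>
    ENNReal.ofReal_mul (gaussianPDFReal_nonneg 0 v p.1)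
  simp_rw [h1]
  rw [MeasureTheory.lintegral_prod_mul hm.aemeasurable hm.aemeasurable]

lemma integral_prod_gauss {v : ℝ≥0} (hv : v ≠ 0) (h : ℝ × ℝ → ℝ) :
    ∫ p, h p ∂((gaussianReal 0 v).prod (gaussianReal 0 v))
      = ∫ p : ℝ × ℝ, gaussianPDFReal 0 v p.1 * gaussianPDFReal 0 v p.2 * h p := by
  rw [prod_gauss_eq hv]
  have hm : Measurable fun p : ℝ × ℝ =>
      (gaussianPDFReal 0 v p.1 * gaussianPDFReal 0 v p.2).toNNReal :=
    (((measurable_gaussianPDFReal 0 v).comp measurable_fst).mul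
      ((measurable_gaussianPDFReal 0 v).comp measurable_snd)).real_toNNReal
  have h2 : (fun p : ℝ × ℝ => ENNReal.ofReal (gaussianPDFReal 0 v p.1 * gaussianPDFReal 0 v p.2))
      = fun p => ((gaussianPDFReal 0 v p.1 * gaussianPDFReal 0 v p.2).toNNReal : ℝ≥0∞) := rfl
  rw [h2, integral_withDensity_eq_integral_smul hm]
  refine integral_congr_ae (Filter.Eventually.of_forall fun p => ?_)
  simp only [NNReal.smul_def, smul_eq_mul, Real.coe_toNNReal _
    (mul_nonneg (gaussianPDFReal_nonneg 0 v p.1) (gaussianPDFReal_nonneg 0 v p.2))]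

lemma sq_abs_eq (z : ℂ) : z.re ^ 2 + z.im ^ 2 = ‖z‖ ^ 2 := by
  rw [Complex.sq_norm, Complex.normSq_apply]; ring

lemma integral_R2_radial (H : ℝ → ℝ) :
    ∫ p : ℝ × ℝ, H (p.1 ^ 2 + p.2 ^ 2) = ∫ z : ℂ, H (‖z‖ ^ 2) := by
  rw [← (Complex.volume_preserving_equiv_real_prod.symm).integral_comp
    Complex.measurableEquivRealProd.symm.measurableEmbedding (fun z : ℂ => H (‖z‖ ^ 2))]
  refine integral_congr_ae (Filter.Eventually.of_forall fun p => ?_)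
  show H _ = H _
  rw [← sq_abs_eq (Complex.measurableEquivRealProd.symm p)]
  simp

lemma gauss_pdf2_mul {v : ℝ≥0} (F : ℝ × ℝ → ℝ) (p : ℝ × ℝ) :
    gaussianPDFReal 0 v p.1 * gaussianPDFReal 0 v p.2 * F p
      = (2*π*v)⁻¹ * (Real.exp (-(2*(v:ℝ))⁻¹ * (p.1^2 + p.2^2)) * F p) := by
  have hs : ((Real.sqrt (2*π*v)))⁻¹ * (Real.sqrt (2*π*v))⁻¹ = (2*π*(v:ℝ))⁻¹ := by
    rw [← mul_inv, Real.mul_self_sqrt (by positivity)]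
  calc gaussianPDFReal 0 v p.1 * gaussianPDFReal 0 v p.2 * F p
      = ((Real.sqrt (2*π*v))⁻¹ * (Real.sqrt (2*π*v))⁻¹)
        * (Real.exp (-(2*(v:ℝ))⁻¹ * p.1^2) * Real.exp (-(2*(v:ℝ))⁻¹ * p.2^2)) * F p := by
        rw [pdf_eq, pdf_eq]; ring
    _ = (2*π*v)⁻¹ * (Real.exp (-(2*(v:ℝ))⁻¹ * (p.1^2 + p.2^2)) * F p) := by
        rw [hs, show -(2*(v:ℝ))⁻¹ * (p.1^2 + p.2^2)
          = (-(2*(v:ℝ))⁻¹ * p.1^2) + (-(2*(v:ℝ))⁻¹ * p.2^2) by ring, Real.exp_add]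
        ring

lemma polar1 {v : ℝ≥0} (hv : v ≠ 0) :
    ∫ p : ℝ × ℝ, gaussianPDFReal 0 v p.1 * gaussianPDFReal 0 v p.2
        * Real.sqrt (p.1 ^ 2 + p.2 ^ 2) = Real.sqrt (2*π*v) / 2 := by
  have hv' : (0:ℝ) < v := NNReal.coe_pos.mpr (pos_iff_ne_zero.mpr hv)
  have hb : (0:ℝ) < (2*(v:ℝ))⁻¹ := by positivity
  calc ∫ p : ℝ × ℝ, gaussianPDFReal 0 v p.1 * gaussianPDFReal 0 v p.2
        * Real.sqrt (p.1 ^ 2 + p.2 ^ 2)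
      = (2*π*v)⁻¹ * ∫ p : ℝ × ℝ,
          Real.exp (-(2*(v:ℝ))⁻¹ * (p.1^2 + p.2^2)) * Real.sqrt (p.1 ^ 2 + p.2 ^ 2) := by
        rw [← integral_const_mul]
        exact integral_congr_ae (Filter.Eventually.of_forall fun p =>
          gauss_pdf2_mul (fun p => Real.sqrt (p.1 ^ 2 + p.2 ^ 2)) p)
    _ = (2*π*v)⁻¹ * ∫ z : ℂ,
          Real.exp (-(2*(v:ℝ))⁻¹ * ‖z‖^2) * Real.sqrt (‖z‖^2) := by
        rw [integral_R2_radial (fun s => Real.exp (-(2*(v:ℝ))⁻¹ * s) * Real.sqrt s)]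
    _ = (2*π*v)⁻¹ * ∫ z : ℂ, ‖z‖ ^ (1:ℝ) * Real.exp (-(2*(v:ℝ))⁻¹ * ‖z‖ ^ (2:ℝ)) := by
        congr 1
        refine integral_congr_ae (Filter.Eventually.of_forall fun z => ?_)
        simp only [Real.rpow_one, Real.rpow_two, Real.sqrt_sq (norm_nonneg z)]
        ring
    _ = (2*π*v)⁻¹ * ((2 * π / 2) * ((2*(v:ℝ))⁻¹) ^ (-((1:ℝ) + 2) / 2) * Real.Gamma (((1:ℝ) + 2) / 2)) := by
        rw [Complex.integral_rpow_mul_exp_neg_mul_rpow one_le_two (by norm_num) hb]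
    _ = Real.sqrt (2*π*v) / 2 := by
        have h1 : ((2*(v:ℝ))⁻¹) ^ (-((1:ℝ) + 2) / 2) = (2*(v:ℝ)) * Real.sqrt (2*(v:ℝ)) := by
          rw [show (-((1:ℝ) + 2) / 2) = -(3/2) by norm_num, Real.inv_rpow (by positivity),
            ← Real.rpow_neg (by positivity), neg_neg,
            show ((3:ℝ)/2) = 1 + (1/2 : ℝ) by norm_num,
            Real.rpow_add (by positivity), Real.rpow_one, ← Real.sqrt_eq_rpow]
        have h2 : Real.Gamma (((1:ℝ) + 2) / 2) = Real.sqrt π / 2 := by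
          rw [show ((1:ℝ) + 2) / 2 = 1/2 + 1 by norm_num, Real.Gamma_add_one (by norm_num),
            Real.Gamma_one_half_eq]
          ring
        rw [h1, h2, show (2:ℝ)*π*v = (2*(v:ℝ))*π by ring, Real.sqrt_mul (by positivity)]
        have hπ : (0:ℝ) < π := Real.pi_pos
        field_simp
        ring_nf
        rw [← Real.sqrt_mul (by positivity : (0:ℝ) ≤ 2),
          ← Real.sqrt_mul (by positivity : (0:ℝ) ≤ 2 * v)]
        congr 1
        ring

lemma polar2 {v : ℝ≥0} (hv : v ≠ 0) :
    ∫ p : ℝ × ℝ, gaussianPDFReal 0 v p.1 * gaussianPDFReal 0 v p.2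
        * (p.1 ^ 2 + p.2 ^ 2) = 2*v := by
  have hv' : (0:ℝ) < v := NNReal.coe_pos.mpr (pos_iff_ne_zero.mpr hv)
  have hb : (0:ℝ) < (2*(v:ℝ))⁻¹ := by positivity
  calc ∫ p : ℝ × ℝ, gaussianPDFReal 0 v p.1 * gaussianPDFReal 0 v p.2 * (p.1 ^ 2 + p.2 ^ 2)
      = (2*π*v)⁻¹ * ∫ p : ℝ × ℝ,
          Real.exp (-(2*(v:ℝ))⁻¹ * (p.1^2 + p.2^2)) * (p.1 ^ 2 + p.2 ^ 2) := by
        rw [← integral_const_mul]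
        exact integral_congr_ae (Filter.Eventually.of_forall fun p =>
          gauss_pdf2_mul (fun p => (p.1 ^ 2 + p.2 ^ 2)) p)
    _ = (2*π*v)⁻¹ * ∫ z : ℂ, Real.exp (-(2*(v:ℝ))⁻¹ * ‖z‖^2) * ‖z‖^2 := by
        rw [integral_R2_radial (fun s => Real.exp (-(2*(v:ℝ))⁻¹ * s) * s)]
    _ = (2*π*v)⁻¹ * ∫ z : ℂ, ‖z‖ ^ (2:ℝ) * Real.exp (-(2*(v:ℝ))⁻¹ * ‖z‖ ^ (2:ℝ)) := by
        congr 1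
        refine integral_congr_ae (Filter.Eventually.of_forall fun z => ?_)
        simp only [Real.rpow_two]
        ring
    _ = (2*π*v)⁻¹ * ((2 * π / 2) * ((2*(v:ℝ))⁻¹) ^ (-((2:ℝ) + 2) / 2) * Real.Gamma (((2:ℝ) + 2) / 2)) := by
        rw [Complex.integral_rpow_mul_exp_neg_mul_rpow one_le_two (by norm_num) hb]
    _ = 2*v := by
        have h1 : ((2*(v:ℝ))⁻¹) ^ (-((2:ℝ) + 2) / 2) = (2*(v:ℝ))^2 := by
          rw [show (-((2:ℝ) + 2) / 2) = -2 by norm_num, Real.inv_rpow (by positivity),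
            ← Real.rpow_neg (by positivity), neg_neg, Real.rpow_two]
        have h2 : Real.Gamma (((2:ℝ) + 2) / 2) = 1 := by
          rw [show ((2:ℝ) + 2) / 2 = 2 by norm_num, Real.Gamma_two]
        rw [h1, h2]
        have hπ : (0:ℝ) < π := Real.pi_pos
        field_simp

lemma moment1' {v : ℝ≥0} (hv : v ≠ 0) :
    ∫ p : ℝ × ℝ, Real.sqrt (p.1 ^ 2 + p.2 ^ 2)
        ∂((gaussianReal 0 v).prod (gaussianReal 0 v)) = Real.sqrt (2*π*v) / 2 := by
  rw [integral_prod_gauss hv]; exact polar1 hv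

lemma moment2' {v : ℝ≥0} (hv : v ≠ 0) :
    ∫ p : ℝ × ℝ, (p.1 ^ 2 + p.2 ^ 2)
        ∂((gaussianReal 0 v).prod (gaussianReal 0 v)) = 2*v := by
  rw [integral_prod_gauss hv]; exact polar2 hv

lemma integrable_gauss_aux {v : ℝ≥0} (hv : v ≠ 0) {h : ℝ → ℝ}
    (hint : Integrable (fun x => h x * gaussianPDFReal 0 v x) volume) :
    Integrable h (gaussianReal 0 v) := by
  rw [gaussianReal_of_var_ne_zero _ hv, integrable_withDensity_iff (measurable_gaussianPDF 0 v)
    (Filter.Eventually.of_forall fun x => ENNReal.ofReal_lt_top)]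
  refine hint.congr (Filter.Eventually.of_forall fun x => ?_)
  simp only [gaussianPDF_def, ENNReal.toReal_ofReal (gaussianPDFReal_nonneg 0 v x)]

lemma integrable_id_gauss {v : ℝ≥0} (hv : v ≠ 0) :
    Integrable (fun x : ℝ => x) (gaussianReal 0 v) := by
  have hv' : (0:ℝ) < v := NNReal.coe_pos.mpr (pos_iff_ne_zero.mpr hv)
  have hb : (0:ℝ) < (2*(v:ℝ))⁻¹ := by positivity
  refine integrable_gauss_aux hv ?_
  refine ((integrable_mul_exp_neg_mul_sq hb).const_mul ((Real.sqrt (2*π*v))⁻¹)).congr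
    (Filter.Eventually.of_forall fun x => ?_)
  simp only [pdf_eq]; ring

lemma integrable_sq_gauss {v : ℝ≥0} (hv : v ≠ 0) :
    Integrable (fun x : ℝ => x ^ 2) (gaussianReal 0 v) := by
  have hv' : (0:ℝ) < v := NNReal.coe_pos.mpr (pos_iff_ne_zero.mpr hv)
  have hb : (0:ℝ) < (2*(v:ℝ))⁻¹ := by positivity
  refine integrable_gauss_aux hv ?_
  refine (((integrable_rpow_mul_exp_neg_mul_sq hb (by norm_num : (-1:ℝ) < 2)).const_mul
    ((Real.sqrt (2*π*v))⁻¹)).congr (Filter.Eventually.of_forall fun x => ?_))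
  simp only [pdf_eq, Real.rpow_two]; ring

lemma iIndepFun_congr_ae {Ω ι : Type*} {β : ι → Type*} [MeasurableSpace Ω] {P : Measure Ω}
    [m : ∀ i, MeasurableSpace (β i)] {f g : ∀ i, Ω → β i}
    (hf : ProbabilityTheory.iIndepFun f P) (h : ∀ i, f i =ᵐ[P] g i) :
    ProbabilityTheory.iIndepFun g P := by
  have : IsProbabilityMeasure P := hf.isProbabilityMeasure
  rw [ProbabilityTheory.iIndepFun_iff_measure_inter_preimage_eq_mul] at hf ⊢
  intro S sets hmeas
  have hS : ∀ i ∈ S, f i =ᵐ[P] g i := fun i _ => h i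
  have hae : ∀ᵐ ω ∂P, ∀ i ∈ S, f i ω = g i ω := (ae_ball_iff S.countable_toSet).2 hS
  have h1 : ∀ i ∈ S, P (g i ⁻¹' sets i) = P (f i ⁻¹' sets i) := by
    intro i hi
    refine measure_congr ?_
    filter_upwards [h i] with ω hω
    show (g i ω ∈ sets i) = (f i ω ∈ sets i)
    rw [hω]
  have h2 : P (⋂ i ∈ S, g i ⁻¹' sets i) = P (⋂ i ∈ S, f i ⁻¹' sets i) := by
    refine measure_congr ?_
    filter_upwards [hae] with ω hω
    show (ω ∈ ⋂ i ∈ S, g i ⁻¹' sets i) = (ω ∈ ⋂ i ∈ S, f i ⁻¹' sets i)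
    simp only [Set.mem_iInter, Set.mem_preimage, eq_iff_iff]
    refine ⟨fun hh i hi => ?_, fun hh i hi => ?_⟩
    · rw [hω i hi]; exact hh i hi
    · rw [← hω i hi]; exact hh i hi
  rw [h2, hf S hmeas]
  exact (Finset.prod_congr rfl h1).symm

lemma sqrt_add_sq_le_abs_add_abs (x y : ℝ) : Real.sqrt (x^2 + y^2) ≤ |x| + |y| := by
  rw [show |x| + |y| = Real.sqrt ((|x| + |y|)^2) from
    (Real.sqrt_sq (by positivity)).symm]
  apply Real.sqrt_le_sqrt
  nlinarith [sq_abs x, sq_abs y, abs_nonneg x, abs_nonneg y, mul_nonneg (abs_nonneg x) (abs_nonneg y)]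

lemma pair_moments {Ω : Type*} [MeasurableSpace Ω] (P : Measure Ω) [IsProbabilityMeasure P]
    {a b : Ω → ℝ} (ha : Measurable a) (hb : Measurable b)
    (hab : ProbabilityTheory.IndepFun a b P) {v : ℝ≥0} (hv : v ≠ 0)
    (hla : Measure.map a P = gaussianReal 0 v) (hlb : Measure.map b P = gaussianReal 0 v) :
    (∫ ω, Real.sqrt (a ω^2 + b ω^2) ∂P = Real.sqrt (2*π*v)/2) ∧
    (∫ ω, (a ω^2 + b ω^2) ∂P = 2*v) ∧
    Integrable (fun ω => Real.sqrt (a ω^2 + b ω^2)) P ∧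
    Integrable (fun ω => a ω^2 + b ω^2) P := by
  have hpairm : AEMeasurable (fun ω => (a ω, b ω)) P := (ha.prodMk hb).aemeasurable
  have hpair : Measure.map (fun ω => (a ω, b ω)) P
      = (gaussianReal 0 v).prod (gaussianReal 0 v) := by
    rw [(ProbabilityTheory.indepFun_iff_map_prod_eq_prod_map_map ha.aemeasurable
      hb.aemeasurable).mp hab, hla, hlb]
  have hm2 : Measurable fun p : ℝ × ℝ => p.1^2 + p.2^2 :=
    (measurable_fst.pow_const 2).add (measurable_snd.pow_const 2)
  have hm1 : Measurable fun p : ℝ × ℝ => Real.sqrt (p.1^2 + p.2^2) := hm2.sqrt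
  have hIa : Integrable a P := by
    have := (integrable_map_measure aestronglyMeasurable_id ha.aemeasurable).mp
      (by rw [hla]; exact integrable_id_gauss hv)
    exact this
  have hIb : Integrable b P := by
    have := (integrable_map_measure aestronglyMeasurable_id hb.aemeasurable).mp
      (by rw [hlb]; exact integrable_id_gauss hv)
    exact this
  have hIa2 : Integrable (fun ω => a ω^2) P := by
    have := (integrable_map_measure (measurable_id.pow_const 2).aestronglyMeasurable
      ha.aemeasurable).mp (by rw [hla]; exact integrable_sq_gauss hv)
    exact this
  have hIb2 : Integrable (fun ω => b ω^2) P := by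
    have := (integrable_map_measure (measurable_id.pow_const 2).aestronglyMeasurable
      hb.aemeasurable).mp (by rw [hlb]; exact integrable_sq_gauss hv)
    exact this
  refine ⟨?_, ?_, ?_, hIa2.add hIb2⟩
  · have := integral_map hpairm hm1.aestronglyMeasurable
      (f := fun p : ℝ × ℝ => Real.sqrt (p.1^2 + p.2^2))
    rw [hpair] at this
    rw [← this, moment1' hv]
  · have := integral_map hpairm hm2.aestronglyMeasurable
      (f := fun p : ℝ × ℝ => p.1^2 + p.2^2)
    rw [hpair] at this
    rw [← this, moment2' hv]
  · refine (hIa.abs.add hIb.abs).mono' ((ha.pow_const 2).add (hb.pow_const 2)).sqrt.aestronglyMeasurable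
      (Filter.Eventually.of_forall fun ω => ?_)
    rw [Real.norm_eq_abs, abs_of_nonneg (Real.sqrt_nonneg _)]
    exact sqrt_add_sq_le_abs_add_abs (a ω) (b ω)

lemma key_integral {Ω : Type*} [MeasurableSpace Ω] (P : Measure Ω) [IsProbabilityMeasure P]
    {N : ℕ} (vA vt : ℝ≥0) (hvA : vA ≠ 0) (hvt : vt ≠ 0)
    (g : Fin N × Fin 4 → Ω → ℝ) (hg : ∀ p, Measurable (g p))
    (hind : ProbabilityTheory.iIndepFun g P)
    (hlaw0 : ∀ n, Measure.map (g (n,0)) P = gaussianReal 0 vA)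
    (hlaw1 : ∀ n, Measure.map (g (n,1)) P = gaussianReal 0 vA)
    (hlaw2 : ∀ n, Measure.map (g (n,2)) P = gaussianReal 0 vt)
    (hlaw3 : ∀ n, Measure.map (g (n,3)) P = gaussianReal 0 vt) :
    ∫ ω, (∑ n, Real.sqrt (g (n,0) ω^2 + g (n,1) ω^2)
          * Real.sqrt (g (n,2) ω^2 + g (n,3) ω^2))^2 ∂P
      = N * ((2*(vA:ℝ))*(2*(vt:ℝ)))
        + ((N:ℝ)^2 - N) * ((Real.sqrt (2*π*(vA:ℝ))/2) * (Real.sqrt (2*π*(vt:ℝ))/2))^2 := by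
  classical
  set c1 : ℝ := (Real.sqrt (2*π*(vA:ℝ))/2) * (Real.sqrt (2*π*(vt:ℝ))/2) with hc1
  set c2 : ℝ := (2*(vA:ℝ))*(2*(vt:ℝ)) with hc2
  set A : Fin N → Ω → ℝ := fun n ω => Real.sqrt (g (n,0) ω^2 + g (n,1) ω^2) with hA
  set B : Fin N → Ω → ℝ := fun n ω => Real.sqrt (g (n,2) ω^2 + g (n,3) ω^2) with hB
  set W : Fin N → Ω → ℝ := fun n ω => A n ω * B n ω with hW
  have hm2 : Measurable fun p : ℝ × ℝ => p.1^2 + p.2^2 :=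
    (measurable_fst.pow_const 2).add (measurable_snd.pow_const 2)
  have hm1 : Measurable fun p : ℝ × ℝ => Real.sqrt (p.1^2 + p.2^2) := hm2.sqrt
  have hAm : ∀ n, Measurable (A n) := fun n =>
    (((hg (n,0)).pow_const 2).add ((hg (n,1)).pow_const 2)).sqrt
  have hBm : ∀ n, Measurable (B n) := fun n =>
    (((hg (n,2)).pow_const 2).add ((hg (n,3)).pow_const 2)).sqrt
  have hWm : ∀ n, Measurable (W n) := fun n => (hAm n).mul (hBm n)
  -- pair moments
  have pmA := fun n : Fin N => pair_moments P (hg (n,0)) (hg (n,1))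
    (hind.indepFun (by simp [Prod.ext_iff])) hvA (hlaw0 n) (hlaw1 n)
  have pmB := fun n : Fin N => pair_moments P (hg (n,2)) (hg (n,3))
    (hind.indepFun (by simp [Prod.ext_iff])) hvt (hlaw2 n) (hlaw3 n)
  -- independence of A n and B n
  have hIndAB : ∀ n, ProbabilityTheory.IndepFun (A n) (B n) P := fun n =>
    (hind.indepFun_prodMk_prodMk hg (n,0) (n,1) (n,2) (n,3)
      (by simp [Prod.ext_iff]) (by simp [Prod.ext_iff]) (by simp [Prod.ext_iff])
      (by simp [Prod.ext_iff])).comp hm1 hm1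
  have hIndAB2 : ∀ n, ProbabilityTheory.IndepFun
      (fun ω => g (n,0) ω^2 + g (n,1) ω^2) (fun ω => g (n,2) ω^2 + g (n,3) ω^2) P := fun n =>
    (hind.indepFun_prodMk_prodMk hg (n,0) (n,1) (n,2) (n,3)
      (by simp [Prod.ext_iff]) (by simp [Prod.ext_iff]) (by simp [Prod.ext_iff])
      (by simp [Prod.ext_iff])).comp hm2 hm2
  have hIntW : ∀ n, Integrable (W n) P := fun n =>
    (hIndAB n).integrable_mul (pmA n).2.2.1 (pmB n).2.2.1
  -- expectation of W n
  have hEW : ∀ n, ∫ ω, W n ω ∂P = c1 := by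
    intro n
    have h := (hIndAB n).integral_mul_eq_mul_integral (hAm n).aestronglyMeasurable (hBm n).aestronglyMeasurable
    have h2 : ∫ ω, W n ω ∂P = ∫ ω, (A n * B n) ω ∂P := rfl
    rw [h2, h, (pmA n).1, (pmB n).1]
  -- expectation of W n * W n
  have hWsq : ∀ n, (fun ω => W n ω * W n ω)
      = fun ω => (g (n,0) ω^2 + g (n,1) ω^2) * (g (n,2) ω^2 + g (n,3) ω^2) := by
    intro n
    funext ω
    simp only [hW, hA, hB]
    rw [mul_mul_mul_comm, Real.mul_self_sqrt (by positivity), Real.mul_self_sqrt (by positivity)]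
  have hEWsq : ∀ n, ∫ ω, W n ω * W n ω ∂P = c2 := by
    intro n
    rw [show (fun ω => W n ω * W n ω) = ((fun ω => g (n,0) ω^2 + g (n,1) ω^2)
      * (fun ω => g (n,2) ω^2 + g (n,3) ω^2)) from hWsq n]
    rw [(hIndAB2 n).integral_mul_eq_mul_integral (((hg (n,0)).pow_const 2).add
      ((hg (n,1)).pow_const 2)).aestronglyMeasurable
      (((hg (n,2)).pow_const 2).add ((hg (n,3)).pow_const 2)).aestronglyMeasurable]
    rw [(pmA n).2.1, (pmB n).2.1]
  have hIntWsq : ∀ n, Integrable (fun ω => W n ω * W n ω) P := by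
    intro n
    rw [hWsq n]
    exact (hIndAB2 n).integrable_mul ((pmA n).2.2.2) ((pmB n).2.2.2)
  -- independence of W n and W m for n ≠ m
  have hIndWW : ∀ n m : Fin N, n ≠ m → ProbabilityTheory.IndepFun (W n) (W m) P := by
    intro n m hnm
    set S : Fin N → Finset (Fin N × Fin 4) := fun n => {(n,0), (n,1), (n,2), (n,3)} with hS
    have hmem : ∀ (n : Fin N) (j : Fin 4), (n, j) ∈ S n := by
      intro n j
      fin_cases j <;> simp [hS]
    have hdisj : Disjoint (S n) (S m) := by
      rw [Finset.disjoint_left]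
      intro a ha hb
      simp only [hS, Finset.mem_insert, Finset.mem_singleton] at ha hb
      apply hnm
      rcases ha with h|h|h|h <;> rcases hb with h'|h'|h'|h' <;>
        rw [Prod.ext_iff] at h h' <;> exact h.1.symm.trans h'.1
    have H := hind.indepFun_finset (S n) (S m) hdisj hg
    set φ : ∀ (k : Fin N), (∀ _ : (S k : Finset (Fin N × Fin 4)), ℝ) → ℝ := fun k x =>
      Real.sqrt ((x ⟨(k,0), hmem k 0⟩)^2 + (x ⟨(k,1), hmem k 1⟩)^2)
        * Real.sqrt ((x ⟨(k,2), hmem k 2⟩)^2 + (x ⟨(k,3), hmem k 3⟩)^2) with hφ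
    have hφm : ∀ k, Measurable (φ k) := by
      intro k
      refine Measurable.mul (Measurable.sqrt (Measurable.add ?_ ?_))
        (Measurable.sqrt (Measurable.add ?_ ?_)) <;>
        exact (measurable_pi_apply _).pow_const 2
    have := H.comp (hφm n) (hφm m)
    exact this
  -- integrability of products
  have hIntWW' : ∀ n m : Fin N, Integrable (fun ω => W n ω * W m ω) P := by
    intro n m
    rcases eq_or_ne n m with rfl | hnm
    · exact hIntWsq n
    · exact (hIndWW n m hnm).integrable_mul (hIntW n) (hIntW m)
  -- the values
  have hval : ∀ n m : Fin N, ∫ ω, W n ω * W m ω ∂P = if n = m then c2 else c1^2 := by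
    intro n m
    rcases eq_or_ne n m with rfl | hnm
    · rw [if_pos rfl]; exact hEWsq n
    · rw [if_neg hnm, show (fun ω => W n ω * W m ω) = (W n * W m) from rfl,
        (hIndWW n m hnm).integral_mul_eq_mul_integral (hWm n).aestronglyMeasurable (hWm m).aestronglyMeasurable,
        hEW n, hEW m, sq]
  -- expansion
  have hexp : ∫ ω, (∑ n, W n ω)^2 ∂P = ∑ n : Fin N, ∑ m : Fin N, ∫ ω, W n ω * W m ω ∂P := by
    have h1 : (fun ω => (∑ n, W n ω)^2) = fun ω => ∑ n : Fin N, ∑ m : Fin N, W n ω * W m ω := by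
      funext ω
      rw [sq, Finset.sum_mul_sum]
    rw [h1, integral_finset_sum _ (fun n _ => integrable_finset_sum _ (fun m _ => hIntWW' n m))]
    exact Finset.sum_congr rfl fun n _ =>
      integral_finset_sum _ (fun m _ => hIntWW' n m)
  have hgoal : (∫ ω, (∑ n, Real.sqrt (g (n,0) ω^2 + g (n,1) ω^2)
      * Real.sqrt (g (n,2) ω^2 + g (n,3) ω^2))^2 ∂P) = ∫ ω, (∑ n, W n ω)^2 ∂P := rfl
  rw [hgoal, hexp]
  have hsum : ∀ n : Fin N, ∑ m : Fin N, (if n = m then c2 else c1^2)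
      = (N:ℝ) * c1^2 + (c2 - c1^2) := by
    intro n
    have : ∀ m : Fin N, (if n = m then c2 else c1^2)
        = c1^2 + (if n = m then c2 - c1^2 else 0) := by
      intro m; split <;> ring
    simp_rw [this]
    rw [Finset.sum_add_distrib, Finset.sum_const, Finset.sum_ite_eq]
    simp [Finset.card_univ, mul_comm]
  calc ∑ n : Fin N, ∑ m : Fin N, ∫ ω, W n ω * W m ω ∂P
      = ∑ n : Fin N, ((N:ℝ) * c1^2 + (c2 - c1^2)) := by
        refine Finset.sum_congr rfl fun n _ => ?_
        rw [show (∑ m : Fin N, ∫ ω, W n ω * W m ω ∂P)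
          = ∑ m : Fin N, (if n = m then c2 else c1^2) from
          Finset.sum_congr rfl fun m _ => hval n m, hsum n]
    _ = (N:ℝ) * ((N:ℝ) * c1^2 + (c2 - c1^2)) := by
        rw [Finset.sum_const, Finset.card_univ, Fintype.card_fin, nsmul_eq_mul]
    _ = N * c2 + ((N:ℝ)^2 - N) * c1^2 := by ring

open Finset Filter in
theorem average_power_max_snr_limit_aux
    {Ω : Type*} [MeasurableSpace Ω] (P : Measure Ω) [IsProbabilityMeasure P]
    (X Y U V : (N : ℕ) → Fin N → Ω → ℝ) (ρA ρt : ℝ) (hρA : 0 < ρA) (hρt : 0 < ρt)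
    (hindep : ∀ N : ℕ, ProbabilityTheory.iIndepFun
      (fun (p : Fin N × Fin 4) => ![X N p.1, Y N p.1, U N p.1, V N p.1] p.2) P)
    (hX : ∀ N n, Measure.map (X N n) P = gaussianReal 0 (Real.toNNReal (ρA ^ 2 / 2)))
    (hY : ∀ N n, Measure.map (Y N n) P = gaussianReal 0 (Real.toNNReal (ρA ^ 2 / 2)))
    (hU : ∀ N n, Measure.map (U N n) P = gaussianReal 0 (Real.toNNReal (ρt ^ 2 / 2)))
    (hV : ∀ N n, Measure.map (V N n) P = gaussianReal 0 (Real.toNNReal (ρt ^ 2 / 2)))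
    (Z : (N : ℕ) → Fin N → Ω → ℝ)
    (hZ : ∀ N n ω, Z N n ω
      = Real.sqrt (X N n ω ^ 2 + Y N n ω ^ 2) * Real.sqrt (U N n ω ^ 2 + V N n ω ^ 2)) :
    Tendsto (fun N : ℕ => (1 / (N : ℝ) ^ 2) * ∫ ω, (∑ n, Z N n ω) ^ 2 ∂P)
      atTop (nhds (π ^ 2 * ρA ^ 2 * ρt ^ 2 / 16)) := by
  set vA : ℝ≥0 := Real.toNNReal (ρA ^ 2 / 2) with hvAdef
  set vt : ℝ≥0 := Real.toNNReal (ρt ^ 2 / 2) with hvtdef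
  have cvA : (vA : ℝ) = ρA ^ 2 / 2 := Real.coe_toNNReal _ (by positivity)
  have cvt : (vt : ℝ) = ρt ^ 2 / 2 := Real.coe_toNNReal _ (by positivity)
  have hvA : vA ≠ 0 := by
    intro h
    have : (vA : ℝ) = 0 := by rw [h]; simp
    rw [cvA] at this
    nlinarith
  have hvt : vt ≠ 0 := by
    intro h
    have : (vt : ℝ) = 0 := by rw [h]; simp
    rw [cvt] at this
    nlinarith
  set c1 : ℝ := (Real.sqrt (2*π*(vA:ℝ))/2) * (Real.sqrt (2*π*(vt:ℝ))/2) with hc1def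
  set c2 : ℝ := (2*(vA:ℝ))*(2*(vt:ℝ)) with hc2def
  have key : ∀ N : ℕ, ∫ ω, (∑ n, Z N n ω) ^ 2 ∂P
      = N * c2 + ((N:ℝ)^2 - N) * c1^2 := by
    intro N
    set f : Fin N × Fin 4 → Ω → ℝ :=
      fun p => ![X N p.1, Y N p.1, U N p.1, V N p.1] p.2 with hf
    have law : ∀ p : Fin N × Fin 4,
        Measure.map (f p) P = gaussianReal 0 (![vA, vA, vt, vt] p.2) := by
      rintro ⟨n, j⟩
      fin_cases j
      · exact hX N n
      · exact hY N n
      · exact hU N n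
      · exact hV N n
    have hae : ∀ p, AEMeasurable (f p) P := by
      intro p
      by_contra hc
      have h0 := Measure.map_of_not_aemeasurable hc
      rw [law p] at h0
      exact (IsProbabilityMeasure.ne_zero _) h0
    set g : Fin N × Fin 4 → Ω → ℝ := fun p => (hae p).mk (f p) with hgdef
    have hg : ∀ p, Measurable (g p) := fun p => (hae p).measurable_mk
    have hfg : ∀ p, f p =ᵐ[P] g p := fun p => (hae p).ae_eq_mk
    have lawg : ∀ p, Measure.map (g p) P = gaussianReal 0 (![vA, vA, vt, vt] p.2) := by
      intro p
      rw [← Measure.map_congr (hfg p)]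
      exact law p
    have hindg : ProbabilityTheory.iIndepFun g P :=
      iIndepFun_congr_ae (hindep N) hfg
    have hZg : ∀ n : Fin N, Z N n =ᵐ[P] fun ω =>
        Real.sqrt (g (n,0) ω^2 + g (n,1) ω^2) * Real.sqrt (g (n,2) ω^2 + g (n,3) ω^2) := by
      intro n
      filter_upwards [hfg (n,0), hfg (n,1), hfg (n,2), hfg (n,3)] with ω h0 h1 h2 h3
      have e0 : X N n ω = g (n,0) ω := h0
      have e1 : Y N n ω = g (n,1) ω := h1
      have e2 : U N n ω = g (n,2) ω := h2
      have e3 : V N n ω = g (n,3) ω := h3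
      rw [hZ N n ω, e0, e1, e2, e3]
    have hsum : (fun ω => (∑ n, Z N n ω) ^ 2) =ᵐ[P] fun ω =>
        (∑ n, Real.sqrt (g (n,0) ω^2 + g (n,1) ω^2)
          * Real.sqrt (g (n,2) ω^2 + g (n,3) ω^2)) ^ 2 := by
      have hall : ∀ᵐ ω ∂P, ∀ n : Fin N, Z N n ω
          = Real.sqrt (g (n,0) ω^2 + g (n,1) ω^2) * Real.sqrt (g (n,2) ω^2 + g (n,3) ω^2) :=
        ae_all_iff.2 hZg
      filter_upwards [hall] with ω hω
      rw [Finset.sum_congr rfl fun n _ => hω n]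
    rw [integral_congr_ae hsum]
    exact key_integral P vA vt hvA hvt g hg hindg
      (fun n => lawg (n,0)) (fun n => lawg (n,1)) (fun n => lawg (n,2)) (fun n => lawg (n,3))
  simp only [key]
  have hc1sq : c1 ^ 2 = π ^ 2 * ρA ^ 2 * ρt ^ 2 / 16 := by
    rw [hc1def, mul_pow, div_pow, div_pow, Real.sq_sqrt (by positivity),
      Real.sq_sqrt (by positivity), cvA, cvt]
    ring
  rw [← hc1sq]
  have h0 : Tendsto (fun N : ℕ => 1/(N:ℝ)) atTop (nhds 0) := tendsto_one_div_atTop_nhds_zero_nat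
  have hlim : Tendsto (fun N : ℕ => c2 * (1/(N:ℝ)) + (c1^2 - c1^2 * (1/(N:ℝ)))) atTop
      (nhds (c2 * 0 + (c1^2 - c1^2 * 0))) :=
    (h0.const_mul c2).add (tendsto_const_nhds.sub (h0.const_mul (c1^2)))
  rw [show c2 * 0 + (c1^2 - c1^2 * 0) = c1^2 by ring] at hlim
  refine hlim.congr' ?_
  filter_upwards [eventually_ge_atTop 1] with N hN
  have hN' : (N:ℝ) ≠ 0 := by
    have : (1:ℝ) ≤ (N:ℝ) := by exact_mod_cast hN
    linarith
  field_simp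

end AuxSection

open MeasureTheory ProbabilityTheory Real Finset Filter

/-- Asymptotic average received power under max-SNR phase shifts: with, for each `N`, `4N`
mutually independent Gaussians as described and `Z N n = √(X² + Y²)·√(U² + V²)`,
`(1/N²) · E[(∑ n, Z N n)²] → π² ρA² ρt² / 16` as `N → ∞`. -/
theorem average_power_max_snr_limit
    {Ω : Type*} [MeasurableSpace Ω] (P : Measure Ω) [IsProbabilityMeasure P]
    (X Y U V : (N : ℕ) → Fin N → Ω → ℝ) (ρA ρt : ℝ) (hρA : 0 < ρA) (hρt : 0 < ρt)
    (hindep : ∀ N : ℕ, iIndepFun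
      (fun (p : Fin N × Fin 4) => ![X N p.1, Y N p.1, U N p.1, V N p.1] p.2) P)
    (hX : ∀ N n, Measure.map (X N n) P = gaussianReal 0 (Real.toNNReal (ρA ^ 2 / 2)))
    (hY : ∀ N n, Measure.map (Y N n) P = gaussianReal 0 (Real.toNNReal (ρA ^ 2 / 2)))
    (hU : ∀ N n, Measure.map (U N n) P = gaussianReal 0 (Real.toNNReal (ρt ^ 2 / 2)))
    (hV : ∀ N n, Measure.map (V N n) P = gaussianReal 0 (Real.toNNReal (ρt ^ 2 / 2)))
    (Z : (N : ℕ) → Fin N → Ω → ℝ)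
    (hZ : ∀ N n ω, Z N n ω
      = Real.sqrt (X N n ω ^ 2 + Y N n ω ^ 2) * Real.sqrt (U N n ω ^ 2 + V N n ω ^ 2)) :
    Tendsto (fun N : ℕ => (1 / (N : ℝ) ^ 2) * ∫ ω, (∑ n, Z N n ω) ^ 2 ∂P)
      atTop (nhds (π ^ 2 * ρA ^ 2 * ρt ^ 2 / 16)) := by
  exact average_power_max_snr_limit_aux P X Y U V ρA ρt hρA hρt hindep hX hY hU hV Z hZ
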